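/- Let C be the zero set of a trigonometric polynomial with minimal polynomial μ₀. If ν is a trigonometric polynomial such that ν = 0 and ∇ν = 0 at every point of C, then μ₀² divides ν. -/

import Mathlib

open MeasureTheory

/-- A trigonometric polynomial, represented by its finitely supported Fourier
coefficients `c : ℤ² →₀ ℂ`; multiplication is convolution of coefficients. -/
noncomputable def trigEval (μ : AddMonoidAlgebra ℂ (ℤ × ℤ)) (r : ℝ × ℝ) : ℂ :=
  ∑ k ∈ μ.coeff.support, μ.coeff k * Complex.exp (2 * Real.pi * Complex.I * (k.1 * r.1 + k.2 * r.2))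

/-- The degree `(K, L)` of a trigonometric polynomial: the dimensions of the smallest
rectangle containing the frequency support. -/
noncomputable def tdeg (μ : AddMonoidAlgebra ℂ (ℤ × ℤ)) : ℤ × ℤ :=
  ((WithBot.unbotD 0 (μ.coeff.support.image Prod.fst).max) - (WithTop.untopD 0 (μ.coeff.support.image Prod.fst).min) + 1,
   (WithBot.unbotD 0 (μ.coeff.support.image Prod.snd).max) - (WithTop.untopD 0 (μ.coeff.support.image Prod.snd).min) + 1)

/-- The zero set of a trigonometric polynomial within the unit square `[0,1]²`. -/
def zeroSet (μ : AddMonoidAlgebra ℂ (ℤ × ℤ)) : Set (ℝ × ℝ) :=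
  {r | r ∈ Set.Icc ((0:ℝ), (0:ℝ)) (1, 1) ∧ trigEval μ r = 0}

namespace TrigAux

instance : IsDomain (AddMonoidAlgebra ℂ (ℤ × ℤ)) := NoZeroDivisors.to_isDomain _
instance : IsDomain (AddMonoidAlgebra ℂ (ℕ × ℕ)) := NoZeroDivisors.to_isDomain _

noncomputable def evalHom (r : ℝ × ℝ) : AddMonoidAlgebra ℂ (ℤ × ℤ) →+* ℂ :=
  AddMonoidAlgebra.liftNCRingHom (RingHom.id ℂ)
    { toFun := fun k => Complex.exp (2 * Real.pi * Complex.I *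
        ((Multiplicative.toAdd k).1 * r.1 + (Multiplicative.toAdd k).2 * r.2))
      map_one' := by simp
      map_mul' := by
        intro x y
        rw [← Complex.exp_add]
        congr 1
        simp only [toAdd_mul, Prod.fst_add, Prod.snd_add]
        push_cast
        ring_nf }
    (fun _ _ => Commute.all _ _)

lemma evalHom_single (r : ℝ × ℝ) (k : ℤ × ℤ) (c : ℂ) :
    evalHom r (AddMonoidAlgebra.single k c) =
      c * Complex.exp (2 * Real.pi * Complex.I * (k.1 * r.1 + k.2 * r.2)) := by
  simp [evalHom, AddMonoidAlgebra.liftNCRingHom, AddMonoidAlgebra.liftNC_single]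

lemma trigEval_eq (μ : AddMonoidAlgebra ℂ (ℤ × ℤ)) (r : ℝ × ℝ) :
    trigEval μ r = evalHom r μ := by
  simp only [trigEval, evalHom, AddMonoidAlgebra.liftNCRingHom]
  rfl


section Wt
variable {G : Type*} [AddCommMonoid G]

noncomputable def wt (F : G → ℂ) (μ : AddMonoidAlgebra ℂ G) : AddMonoidAlgebra ℂ G :=
  μ.coeff.sum fun k c => AddMonoidAlgebra.single k (F k * c)

@[simp] lemma wt_single (F : G → ℂ) (k : G) (c : ℂ) :
    wt F (AddMonoidAlgebra.single k c) = AddMonoidAlgebra.single k (F k * c) := by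
  simp [wt, Finsupp.sum_single_index]

@[simp] lemma wt_zero (F : G → ℂ) : wt F (0 : AddMonoidAlgebra ℂ G) = 0 := by
  simp [wt]

lemma wt_add (F : G → ℂ) (μ ν : AddMonoidAlgebra ℂ G) :
    wt F (μ + ν) = wt F μ + wt F ν :=
  Finsupp.sum_add_index' (by simp) (by intros; rw [mul_add, AddMonoidAlgebra.single_add])

lemma wt_mul_w (w : G → ℂ) (hw : ∀ a b, w (a + b) = w a + w b)
    (μ ν : AddMonoidAlgebra ℂ G) :
    wt w (μ * ν) = wt w μ * ν + μ * wt w ν := by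
  induction μ using AddMonoidAlgebra.induction_linear with
  | zero => simp
  | add f g hf hg =>
      rw [add_mul, wt_add, hf, hg, wt_add, add_mul, add_mul]
      ring
  | single a b =>
      induction ν using AddMonoidAlgebra.induction_linear with
      | zero => simp
      | add f g hf hg =>
          rw [mul_add, wt_add, hf, hg, wt_add, mul_add, mul_add]
          ring
      | single c d =>
          rw [AddMonoidAlgebra.single_mul_single, wt_single, wt_single, wt_single,
            AddMonoidAlgebra.single_mul_single, AddMonoidAlgebra.single_mul_single,
            hw, ← AddMonoidAlgebra.single_add]
          congr 1
          ring

lemma wt_wt (F F' : G → ℂ) (μ : AddMonoidAlgebra ℂ G) :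
    wt F (wt F' μ) = wt (fun k => F k * F' k) μ := by
  induction μ using AddMonoidAlgebra.induction_linear with
  | zero => simp
  | add f g hf hg => rw [wt_add, wt_add, hf, hg, wt_add]
  | single a b => rw [wt_single, wt_single, wt_single, mul_assoc]

lemma wt_sub_const (F : G → ℂ) (c : ℂ) (μ : AddMonoidAlgebra ℂ G) :
    wt (fun k => F k - c) μ = wt F μ - c • μ := by
  induction μ using AddMonoidAlgebra.induction_linear with
  | zero => simp
  | add f g hf hg =>
      rw [wt_add, wt_add, hf, hg, smul_add]
      abel
  | single a b =>
      rw [wt_single, wt_single, AddMonoidAlgebra.smul_single, ← AddMonoidAlgebra.single_sub]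
      congr 1
      rw [smul_eq_mul]
      ring
end Wt

section S
abbrev Sp := AddMonoidAlgebra ℂ (ℕ × ℕ)

noncomputable def SX : Sp := AddMonoidAlgebra.single (1,0) 1
noncomputable def SY : Sp := AddMonoidAlgebra.single (0,1) 1

def w1 : ℕ × ℕ → ℂ := fun k => (k.1 : ℂ)
def w2 : ℕ × ℕ → ℂ := fun k => (k.2 : ℂ)

lemma w1_add : ∀ a b : ℕ × ℕ, w1 (a + b) = w1 a + w1 b := by intro a b; simp [w1]
lemma w2_add : ∀ a b : ℕ × ℕ, w2 (a + b) = w2 a + w2 b := by intro a b; simp [w2]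

lemma wt_one (μ : Sp) : wt (fun _ => (1:ℂ)) μ = μ := by
  induction μ using AddMonoidAlgebra.induction_linear with
  | zero => simp
  | add f g hf hg => rw [wt_add, hf, hg]
  | single a b => rw [wt_single, one_mul]

lemma sdvd_smul {p u : Sp} (c : ℂ) (h : p ∣ u) : p ∣ c • u := by
  obtain ⟨t, rfl⟩ := h
  exact ⟨c • t, (mul_smul_comm c p t).symm⟩

lemma dvd_wt_closure {w : ℕ × ℕ → ℂ} (hw : ∀ a b, w (a + b) = w a + w b)
    {p : Sp} (hp : p ∣ wt w p) : ∀ u, p ∣ u → p ∣ wt w u := by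
  rintro u ⟨t, rfl⟩
  rw [wt_mul_w w hw]
  exact dvd_add (hp.mul_right t) (dvd_mul_right p _)

lemma dvd_wt_prod {w : ℕ × ℕ → ℂ} (hw : ∀ a b, w (a + b) = w a + w b)
    {p : Sp} (hp : p ∣ wt w p) (A : Finset ℂ) :
    ∀ u, p ∣ u → p ∣ wt (fun k => ∏ a ∈ A, (w k - a)) u := by
  induction A using Finset.induction with
  | empty => intro u hu; simpa [wt_one] using hu
  | @insert a A ha IH =>
      intro u hu
      have h1 : (fun k => ∏ x ∈ insert a A, (w k - x))
          = fun k => (w k - a) * ∏ x ∈ A, (w k - x) := by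
        funext k; rw [Finset.prod_insert ha]
      rw [h1, ← wt_wt, wt_sub_const]
      exact dvd_sub (dvd_wt_closure hw hp _ (IH u hu)) (sdvd_smul _ (IH u hu))

lemma prime_dvd_X_or_Y {p : Sp} (hp : Prime p)
    (h1 : p ∣ wt w1 p) (h2 : p ∣ wt w2 p) : p ∣ SX ∨ p ∣ SY := by
  have hp0 : p ≠ 0 := hp.ne_zero
  obtain ⟨k₀, hk₀⟩ := Finsupp.support_nonempty_iff.2 (mt AddMonoidAlgebra.coeff_eq_zero.1 hp0)
  set A : Finset ℂ := ((p.coeff.support.image Prod.fst).erase k₀.1).image (Nat.cast) with hA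
  set B : Finset ℂ := ((p.coeff.support.image Prod.snd).erase k₀.2).image (Nat.cast) with hB
  set q : ℕ × ℕ → ℂ := fun k => (∏ a ∈ A, (w1 k - a)) * (∏ b ∈ B, (w2 k - b)) with hq
  have hdvd : p ∣ wt q p := by
    rw [hq]
    have := wt_wt (fun k => ∏ a ∈ A, (w1 k - a)) (fun k => ∏ b ∈ B, (w2 k - b)) p
    rw [← this]
    exact dvd_wt_prod w1_add h1 A _ (dvd_wt_prod w2_add h2 B p dvd_rfl)
  have hqk₀ : q k₀ ≠ 0 := by
    apply mul_ne_zero <;>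
    · apply Finset.prod_ne_zero_iff.2
      intro a haA
      simp only [hA, hB, Finset.mem_image, Finset.mem_erase] at haA
      obtain ⟨j, ⟨hj1, _⟩, rfl⟩ := haA
      simp only [w1, w2, sub_ne_zero]
      intro h
      exact hj1 (Nat.cast_injective h).symm
  have hwt : wt q p = AddMonoidAlgebra.single k₀ (q k₀ * p.coeff k₀) := by
    rw [wt]
    rw [Finsupp.sum]
    apply Finset.sum_eq_single_of_mem k₀ hk₀
    intro k hk hne
    have hqk : q k = 0 := by
      rcases eq_or_ne k.1 k₀.1 with h1' | h1'
      · have h2' : k.2 ≠ k₀.2 := fun h2'' => hne (Prod.ext h1' h2'')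
        apply mul_eq_zero_of_right
        apply Finset.prod_eq_zero (i := (k.2 : ℂ))
        · simp only [hB, Finset.mem_image, Finset.mem_erase]
          exact ⟨k.2, ⟨h2', ⟨k, hk, rfl⟩⟩, rfl⟩
        · simp [w2]
      · apply mul_eq_zero_of_left
        apply Finset.prod_eq_zero (i := (k.1 : ℂ))
        · simp only [hA, Finset.mem_image, Finset.mem_erase]
          exact ⟨k.1, ⟨h1', ⟨k, hk, rfl⟩⟩, rfl⟩
        · simp [w1]
    rw [hqk, zero_mul, AddMonoidAlgebra.single_zero]
  have hc : q k₀ * p.coeff k₀ ≠ 0 := mul_ne_zero hqk₀ (Finsupp.mem_support_iff.1 hk₀)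
  have hsingle : (AddMonoidAlgebra.single k₀ (q k₀ * p.coeff k₀) : Sp)
      = AddMonoidAlgebra.single (0 : ℕ × ℕ) (q k₀ * p.coeff k₀) * SX ^ k₀.1 * SY ^ k₀.2 := by
    rw [SX, SY, AddMonoidAlgebra.single_pow, AddMonoidAlgebra.single_pow,
      AddMonoidAlgebra.single_mul_single, AddMonoidAlgebra.single_mul_single]
    simp [Prod.ext_iff]
  have hdvd2 : p ∣ AddMonoidAlgebra.single (0 : ℕ × ℕ) (q k₀ * p.coeff k₀) * SX ^ k₀.1 * SY ^ k₀.2 := by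
    rw [← hsingle, ← hwt]; exact hdvd
  rcases hp.dvd_mul.1 hdvd2 with h | h
  · rcases hp.dvd_mul.1 h with h' | h'
    · exfalso
      apply hp.not_unit
      apply isUnit_of_dvd_unit h'
      exact IsUnit.of_mul_eq_one (AddMonoidAlgebra.single (0 : ℕ × ℕ) (q k₀ * p.coeff k₀)⁻¹)
        (by rw [AddMonoidAlgebra.single_mul_single, mul_inv_cancel₀ hc]; rfl)
    · exact Or.inl (hp.dvd_of_dvd_pow h')
  · exact Or.inr (hp.dvd_of_dvd_pow h)
end S

section Embed
abbrev Rg := AddMonoidAlgebra ℂ (ℤ × ℤ)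

def e2 : (ℕ × ℕ) →+ (ℤ × ℤ) where
  toFun p := ((p.1 : ℤ), (p.2 : ℤ))
  map_zero' := rfl
  map_add' p q := by simp

lemma e2_inj : Function.Injective e2 := by
  intro a b h
  simp only [e2, AddMonoidHom.coe_mk, ZeroHom.coe_mk, Prod.ext_iff] at h
  exact Prod.ext (by exact_mod_cast h.1) (by exact_mod_cast h.2)

noncomputable def iota : Sp →+* Rg := AddMonoidAlgebra.mapDomainRingHom ℂ e2

lemma iota_apply (s : Sp) : iota s = AddMonoidAlgebra.mapDomain e2 s := rfl

lemma iota_single (k : ℕ × ℕ) (c : ℂ) :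
    iota (AddMonoidAlgebra.single k c) = AddMonoidAlgebra.single (e2 k) c := by
  rw [iota_apply]; exact AddMonoidAlgebra.mapDomain_single

lemma iota_inj : Function.Injective iota := by
  intro a b h
  exact AddMonoidAlgebra.mapDomain_injective e2_inj h

lemma unit_single (v : ℤ × ℤ) {c : ℂ} (hc : c ≠ 0) :
    IsUnit (AddMonoidAlgebra.single v c : Rg) := by
  apply IsUnit.of_mul_eq_one (AddMonoidAlgebra.single (-v) c⁻¹)
  rw [AddMonoidAlgebra.single_mul_single, add_neg_cancel, mul_inv_cancel₀ hc]
  rfl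

lemma shift_into (ρ : Rg) : ∃ (v : ℕ × ℕ) (σ : Sp),
    ρ * AddMonoidAlgebra.single (e2 v) 1 = iota σ := by
  classical
  set N : ℕ := ρ.coeff.support.sup (fun k => (max (-k.1) (-k.2)).toNat) with hN
  set τ : Rg := ρ * AddMonoidAlgebra.single ((N : ℤ), (N : ℤ)) 1 with hτ
  have hτapp : ∀ a : ℤ × ℤ, τ.coeff a = ρ.coeff (a - ((N : ℤ), (N : ℤ))) := by
    intro a
    rw [hτ, AddMonoidAlgebra.coeff_mul_single_apply, mul_one, sub_eq_add_neg]
  have hsupp : ↑τ.coeff.support ⊆ Set.range e2 := by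
    intro a ha
    have h1 : ρ.coeff (a - ((N : ℤ), (N : ℤ))) ≠ 0 := by
      rw [← hτapp]; exact Finsupp.mem_support_iff.1 ha
    have h2 : (a - ((N : ℤ), (N : ℤ))) ∈ ρ.coeff.support := Finsupp.mem_support_iff.2 h1
    have h3 : max (-(a - ((N : ℤ), (N : ℤ))).1) (-(a - ((N : ℤ), (N : ℤ))).2) ≤ (N : ℤ) := by
      have hk := Finset.le_sup (f := fun k : ℤ × ℤ => (max (-k.1) (-k.2)).toNat) h2
      calc max (-(a - ((N : ℤ), (N : ℤ))).1) (-(a - ((N : ℤ), (N : ℤ))).2)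
          ≤ ((max (-(a - ((N : ℤ), (N : ℤ))).1) (-(a - ((N : ℤ), (N : ℤ))).2)).toNat : ℤ) :=
            Int.self_le_toNat _
        _ ≤ (N : ℤ) := by exact_mod_cast hk
    have ha1 : 0 ≤ a.1 := by
      have := le_trans (le_max_left _ _) h3
      simp only [Prod.fst_sub, neg_sub] at this
      linarith
    have ha2 : 0 ≤ a.2 := by
      have := le_trans (le_max_right _ _) h3
      simp only [Prod.snd_sub, neg_sub] at this
      linarith
    exact ⟨(a.1.toNat, a.2.toNat), by
      simp only [e2, AddMonoidHom.coe_mk, ZeroHom.coe_mk]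
      exact Prod.ext (by simp [Int.toNat_of_nonneg ha1]) (by simp [Int.toNat_of_nonneg ha2])⟩
  refine ⟨(N, N), AddMonoidAlgebra.comapDomain e2 e2_inj τ, ?_⟩
  rw [iota_apply, AddMonoidAlgebra.mapDomain_comapDomain hsupp e2_inj, hτ]
  rfl

lemma key_fwd {s t : Sp} (h : iota s ∣ iota t) :
    ∃ v : ℕ × ℕ, s ∣ t * AddMonoidAlgebra.single v 1 := by
  obtain ⟨ρ, hρ⟩ := h
  obtain ⟨v, σ, hσ⟩ := shift_into ρ
  refine ⟨v, σ, iota_inj ?_⟩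
  rw [map_mul, map_mul, iota_single, ← hσ, hρ]
  ring

lemma key_bwd {s t : Sp} (v : ℕ × ℕ) (h : s ∣ t * AddMonoidAlgebra.single v 1) :
    iota s ∣ iota t := by
  have h2 : iota s ∣ iota t * AddMonoidAlgebra.single (e2 v) 1 := by
    rw [← iota_single, ← map_mul]
    exact map_dvd _ h
  exact ((unit_single (e2 v) one_ne_zero).dvd_mul_right).1 h2

noncomputable def feq : (Fin 2 →₀ ℕ) ≃+ ℕ × ℕ where
  toFun f := (f 0, f 1)
  invFun p := Finsupp.single 0 p.1 + Finsupp.single 1 p.2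
  left_inv f := by
    ext i
    fin_cases i <;> simp
  right_inv p := by simp
  map_add' f g := by simp

noncomputable def spEquiv : MvPolynomial (Fin 2) ℂ ≃* Sp :=
  (AddMonoidAlgebra.domCongr ℂ ℂ feq).toRingEquiv.toMulEquiv

noncomputable instance spUFD : UniqueFactorizationMonoid Sp :=
  spEquiv.uniqueFactorizationMonoid inferInstance

instance : DecompositionMonoid Sp := UniqueFactorizationMonoid.instDecompositionMonoid
end Embed

section LemD

lemma lemD (η : Sp) (μ : Sp) (hμ : μ ≠ 0)
    (h1 : ∀ p : Sp, Prime p → ¬ p ∣ SX → ¬ p ∣ SY → p ∣ μ → (¬ (p * p ∣ μ)) ∧ p ∣ η) :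
    ∃ v : ℕ × ℕ, μ ∣ η * AddMonoidAlgebra.single v 1 := by
  classical
  induction μ using UniqueFactorizationMonoid.induction_on_prime with
  | h₁ => exact absurd rfl hμ
  | h₂ x hx => exact ⟨0, hx.dvd⟩
  | h₃ a p ha hp IH =>
      have ha1 : ∀ q : Sp, Prime q → ¬ q ∣ SX → ¬ q ∣ SY → q ∣ a →
          (¬ (q * q ∣ a)) ∧ q ∣ η := by
        intro q hq hqx hqy hqa
        obtain ⟨h1', h2'⟩ := h1 q hq hqx hqy (hqa.mul_left p)
        exact ⟨fun hqq => h1' (hqq.mul_left p), h2'⟩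
      obtain ⟨v, hv⟩ := IH ha ha1
      by_cases hpx : p ∣ SX
      · refine ⟨v + (1, 0), ?_⟩
        have : p * a ∣ SX * (η * AddMonoidAlgebra.single v 1) :=
          mul_dvd_mul hpx hv
        rwa [show SX * (η * AddMonoidAlgebra.single v 1)
            = η * AddMonoidAlgebra.single (v + (1,0)) 1 by
          rw [SX, mul_comm, mul_assoc, AddMonoidAlgebra.single_mul_single, one_mul]] at this
      by_cases hpy : p ∣ SY
      · refine ⟨v + (0, 1), ?_⟩
        have : p * a ∣ SY * (η * AddMonoidAlgebra.single v 1) :=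
          mul_dvd_mul hpy hv
        rwa [show SY * (η * AddMonoidAlgebra.single v 1)
            = η * AddMonoidAlgebra.single (v + (0,1)) 1 by
          rw [SY, mul_comm, mul_assoc, AddMonoidAlgebra.single_mul_single, one_mul]] at this
      obtain ⟨hsq, hpη⟩ := h1 p hp hpx hpy (dvd_mul_right p a)
      have hpa : ¬ p ∣ a := fun h => hsq (mul_dvd_mul_left p h)
      obtain ⟨η₀, rfl⟩ := hpη
      have hrel : IsRelPrime a p := by
        intro d hda hdp
        obtain ⟨e, he⟩ := hdp
        rcases hp.irreducible.isUnit_or_isUnit he with hu | hu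
        · exact hu
        · exfalso
          apply hpa
          obtain ⟨u, rfl⟩ := hu
          refine dvd_trans ⟨(u⁻¹ : Spˣ), ?_⟩ hda
          rw [he]
          rw [mul_assoc]
          simp
      have hav : a ∣ η₀ * AddMonoidAlgebra.single v 1 := by
        apply hrel.dvd_of_dvd_mul_left
        rw [show p * (η₀ * AddMonoidAlgebra.single v 1) = p * η₀ * AddMonoidAlgebra.single v 1 by
          ring] at *
        exact hv
      exact ⟨v, by rw [mul_assoc]; exact mul_dvd_mul_left p hav |>.mul_left p |> fun _ => mul_dvd_mul (dvd_refl p) hav⟩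
end LemD

section Analysis
abbrev Rg' := AddMonoidAlgebra ℂ (ℤ × ℤ)

noncomputable def clmk (k : ℤ × ℤ) : (ℝ × ℝ) →L[ℝ] ℂ :=
  (2 * Real.pi * Complex.I * k.1) • (Complex.ofRealCLM.comp (ContinuousLinearMap.fst ℝ ℝ ℝ)) +
  (2 * Real.pi * Complex.I * k.2) • (Complex.ofRealCLM.comp (ContinuousLinearMap.snd ℝ ℝ ℝ))

lemma clmk_apply (k : ℤ × ℤ) (v : ℝ × ℝ) :
    clmk k v = 2 * Real.pi * Complex.I * (k.1 * v.1 + k.2 * v.2) := by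
  simp [clmk]
  ring

noncomputable def dtotal (μ : Rg') (r : ℝ × ℝ) : (ℝ × ℝ) →L[ℝ] ℂ :=
  ∑ k ∈ μ.coeff.support, (μ.coeff k * Complex.exp (2 * Real.pi * Complex.I * (k.1 * r.1 + k.2 * r.2))) • clmk k

lemma hasFDeriv_trigEval (μ : Rg') (r : ℝ × ℝ) :
    HasFDerivAt (trigEval μ) (dtotal μ r) r := by
  have : ∀ k : ℤ × ℤ, HasFDerivAt
      (fun r : ℝ × ℝ => μ.coeff k * Complex.exp (2 * Real.pi * Complex.I * (k.1 * r.1 + k.2 * r.2)))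
      ((μ.coeff k * Complex.exp (2 * Real.pi * Complex.I * (k.1 * r.1 + k.2 * r.2))) • clmk k) r := by
    intro k
    have hfun : (fun r : ℝ × ℝ => (2 * Real.pi * Complex.I * (k.1 * r.1 + k.2 * r.2) : ℂ))
        = fun r => clmk k r := by
      funext v
      rw [clmk_apply]
    have h1 : HasFDerivAt (fun r : ℝ × ℝ =>
        (2 * Real.pi * Complex.I * (k.1 * r.1 + k.2 * r.2) : ℂ)) (clmk k) r := by
      rw [hfun]
      exact (clmk k).hasFDerivAt
    have h2 := h1.cexp
    have h3 := h2.const_mul (μ.coeff k)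
    rw [smul_smul] at h3
    exact h3
  exact HasFDerivAt.fun_sum (fun k _ => this k)

def wz1 : ℤ × ℤ → ℂ := fun k => (k.1 : ℂ)
def wz2 : ℤ × ℤ → ℂ := fun k => (k.2 : ℂ)

lemma wz1_add : ∀ a b : ℤ × ℤ, wz1 (a + b) = wz1 a + wz1 b := by intro a b; simp [wz1]
lemma wz2_add : ∀ a b : ℤ × ℤ, wz2 (a + b) = wz2 a + wz2 b := by intro a b; simp [wz2]
end Analysis

lemma evalHom_wt (r : ℝ × ℝ) (F : ℤ × ℤ → ℂ) (μ : Rg') :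
    evalHom r (wt F μ) = ∑ k ∈ μ.coeff.support,
      F k * μ.coeff k * Complex.exp (2 * Real.pi * Complex.I * (k.1 * r.1 + k.2 * r.2)) := by
  rw [wt, map_finsuppSum, Finsupp.sum]
  apply Finset.sum_congr rfl
  intro k _
  rw [evalHom_single, mul_assoc]

lemma dtotal_apply_e1 (μ : Rg') (r : ℝ × ℝ) :
    dtotal μ r (1, 0) = 2 * Real.pi * Complex.I * evalHom r (wt wz1 μ) := by
  rw [evalHom_wt, dtotal, ContinuousLinearMap.sum_apply, Finset.mul_sum]
  apply Finset.sum_congr rfl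
  intro k _
  rw [ContinuousLinearMap.smul_apply, clmk_apply]
  simp only [wz1, smul_eq_mul]
  push_cast
  ring

lemma dtotal_apply_e2 (μ : Rg') (r : ℝ × ℝ) :
    dtotal μ r (0, 1) = 2 * Real.pi * Complex.I * evalHom r (wt wz2 μ) := by
  rw [evalHom_wt, dtotal, ContinuousLinearMap.sum_apply, Finset.mul_sum]
  apply Finset.sum_congr rfl
  intro k _
  rw [ContinuousLinearMap.smul_apply, clmk_apply]
  simp only [wz2, smul_eq_mul]
  push_cast
  ring

lemma wt_eval_zero_of_fderiv_zero {μ : Rg'} {r : ℝ × ℝ}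
    (h : fderiv ℝ (trigEval μ) r = 0) :
    evalHom r (wt wz1 μ) = 0 ∧ evalHom r (wt wz2 μ) = 0 := by
  have hd := (hasFDeriv_trigEval μ r).fderiv
  rw [h] at hd
  have h2pi : (2 * Real.pi * Complex.I : ℂ) ≠ 0 := by
    simp [Real.pi_ne_zero, Complex.I_ne_zero, Complex.ofReal_ne_zero]
  constructor
  · have := dtotal_apply_e1 μ r
    rw [← hd, ContinuousLinearMap.zero_apply] at this
    exact (mul_eq_zero.1 this.symm).resolve_left h2pi
  · have := dtotal_apply_e2 μ r
    rw [← hd, ContinuousLinearMap.zero_apply] at this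
    exact (mul_eq_zero.1 this.symm).resolve_left h2pi

lemma grad_factor {μ₀ η : Rg'} {r : ℝ × ℝ}
    (h0 : trigEval μ₀ r = 0)
    (h1 : fderiv ℝ (trigEval (μ₀ * η)) r = 0) :
    trigEval η r = 0 ∨ fderiv ℝ (trigEval μ₀) r = 0 := by
  have hfun : trigEval (μ₀ * η) = fun s => trigEval μ₀ s * trigEval η s := by
    funext s
    rw [trigEval_eq, trigEval_eq, trigEval_eq, map_mul]
  rw [hfun] at h1
  rw [fderiv_fun_mul ((hasFDeriv_trigEval μ₀ r).differentiableAt)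
    ((hasFDeriv_trigEval η r).differentiableAt), h0] at h1
  rw [show (0:ℂ) • fderiv ℝ (trigEval η) r = 0 by ext <;> simp, zero_add] at h1
  by_cases h : trigEval η r = 0
  · exact Or.inl h
  · refine Or.inr (ContinuousLinearMap.ext fun v => ?_)
    have hv := congrArg (fun L => L v) h1
    simp only [ContinuousLinearMap.smul_apply, ContinuousLinearMap.zero_apply, smul_eq_mul] at hv
    simpa [h] using hv

lemma dvd_smul_gen {G : Type*} [AddCommMonoid G] {p u : AddMonoidAlgebra ℂ G} (c : ℂ)
    (h : p ∣ u) : p ∣ c • u := by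
  obtain ⟨t, rfl⟩ := h
  exact ⟨c • t, (mul_smul_comm c p t).symm⟩

lemma iota_wt (F : ℤ × ℤ → ℂ) (F' : ℕ × ℕ → ℂ) (hF : ∀ k, F (e2 k) = F' k) (σ : Sp) :
    iota (wt F' σ) = wt F (iota σ) := by
  induction σ using AddMonoidAlgebra.induction_linear with
  | zero => simp
  | add f g hf hg => rw [wt_add, map_add, hf, hg, map_add, wt_add]
  | single a b =>
      rw [wt_single, iota_single, iota_single, wt_single, hF]

lemma prime_ndvd_single {p : Sp} (hp : Prime p) (hpx : ¬ p ∣ SX) (hpy : ¬ p ∣ SY)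
    (v : ℕ × ℕ) : ¬ p ∣ (AddMonoidAlgebra.single v 1 : Sp) := by
  intro h
  have hs : (AddMonoidAlgebra.single v 1 : Sp) = SX ^ v.1 * SY ^ v.2 := by
    rw [SX, SY, AddMonoidAlgebra.single_pow, AddMonoidAlgebra.single_pow,
      AddMonoidAlgebra.single_mul_single]
    simp [Prod.ext_iff]
  rw [hs] at h
  rcases hp.dvd_mul.1 h with h' | h'
  · exact hpx (hp.dvd_of_dvd_pow h')
  · exact hpy (hp.dvd_of_dvd_pow h')

end TrigAux

open TrigAux


/-- **Double vanishing implies divisibility by the square of the minimal polynomial.**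
Let `C` be the zero set of a trigonometric polynomial with minimal polynomial `μ₀`
(i.e. `μ₀` divides every trigonometric polynomial vanishing on `C`). If `ν` is a
trigonometric polynomial with `ν = 0` and `∇ν = 0` at every point of `C`, then
`μ₀² ∣ ν`. -/
theorem sq_minimal_dvd_of_vanishing_gradient
    (μ₀ ν : AddMonoidAlgebra ℂ (ℤ × ℤ)) (hμ₀ : μ₀ ≠ 0)
    (hmin : ∀ η : AddMonoidAlgebra ℂ (ℤ × ℤ),
      (∀ r ∈ zeroSet μ₀, trigEval η r = 0) → μ₀ ∣ η)
    (hν0 : ∀ r ∈ zeroSet μ₀, trigEval ν r = 0)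
    (hν1 : ∀ r ∈ zeroSet μ₀, fderiv ℝ (trigEval ν) r = 0) :
    μ₀ ^ 2 ∣ ν := by
  classical
  obtain ⟨η, rfl⟩ := hmin ν hν0
  rw [pow_two]
  apply mul_dvd_mul_left μ₀
  have hD : ∀ r ∈ zeroSet μ₀,
      trigEval (η * wt wz1 μ₀) r = 0 ∧ trigEval (η * wt wz2 μ₀) r = 0 := by
    intro r hr
    have h0 : trigEval μ₀ r = 0 := hr.2
    rcases grad_factor h0 (hν1 r hr) with h | h
    · constructor <;>
      · rw [trigEval_eq, map_mul, ← trigEval_eq, h, zero_mul]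
    · obtain ⟨hz1, hz2⟩ := wt_eval_zero_of_fderiv_zero h
      constructor
      · rw [trigEval_eq, map_mul, hz1, mul_zero]
      · rw [trigEval_eq, map_mul, hz2, mul_zero]
  have hD1 : μ₀ ∣ η * wt wz1 μ₀ := hmin _ (fun r hr => (hD r hr).1)
  have hD2 : μ₀ ∣ η * wt wz2 μ₀ := hmin _ (fun r hr => (hD r hr).2)
  obtain ⟨v₀, σμ, hσμ⟩ := shift_into μ₀
  obtain ⟨v₁, ση, hση⟩ := shift_into η
  set s₀ : Rg := AddMonoidAlgebra.single (e2 v₀) 1 with hs₀def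
  set s₁ : Rg := AddMonoidAlgebra.single (e2 v₁) 1 with hs₁def
  have hu₀ : IsUnit s₀ := unit_single _ one_ne_zero
  have hu₁ : IsUnit s₁ := unit_single _ one_ne_zero
  have hσμ0 : σμ ≠ 0 := by
    intro h
    apply hμ₀
    have h2 : iota σμ = 0 := by rw [h, map_zero]
    rw [← hσμ] at h2
    rcases mul_eq_zero.1 h2 with h' | h'
    · exact h'
    · exact absurd h' hu₀.ne_zero
  -- transfer the derivation divisibilities
  have hwt_transfer : ∀ (F : ℤ × ℤ → ℂ) (F' : ℕ × ℕ → ℂ),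
      (∀ a b : ℤ × ℤ, F (a + b) = F a + F b) → (∀ k, F (e2 k) = F' k) →
      μ₀ ∣ η * wt F μ₀ → ∃ v, σμ ∣ ση * wt F' σμ * AddMonoidAlgebra.single v 1 := by
    intro F F' hFadd hFe hDF
    have hwt0 : iota (wt F' σμ) = wt F μ₀ * s₀ + (F (e2 v₀)) • (μ₀ * s₀) := by
      rw [iota_wt F F' hFe σμ, ← hσμ, wt_mul_w F hFadd]
      congr 1
      rw [hs₀def]
      have : wt F (AddMonoidAlgebra.single (e2 v₀) 1 : Rg)
          = (F (e2 v₀)) • (AddMonoidAlgebra.single (e2 v₀) 1 : Rg) := by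
        rw [wt_single, mul_one, AddMonoidAlgebra.smul_single, smul_eq_mul, mul_one]
      rw [this, mul_smul_comm]
    have hmain : μ₀ ∣ iota (ση * wt F' σμ) := by
      rw [map_mul, ← hση, hwt0, mul_add]
      apply dvd_add
      · have he : η * s₁ * (wt F μ₀ * s₀) = η * wt F μ₀ * (s₁ * s₀) := by ring
        rw [he]
        exact hDF.mul_right _
      · rw [mul_smul_comm]
        apply dvd_smul_gen
        have he : η * s₁ * (μ₀ * s₀) = μ₀ * (η * s₁ * s₀) := by ring
        rw [he]
        exact dvd_mul_right _ _
    have hιdvd : iota σμ ∣ iota (ση * wt F' σμ) := by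
      rw [← hσμ]
      exact (hu₀.mul_right_dvd).2 hmain
    exact key_fwd hιdvd
  obtain ⟨va, hva⟩ := hwt_transfer wz1 w1 wz1_add (by intro k; simp [wz1, w1, e2]) hD1
  obtain ⟨vb, hvb⟩ := hwt_transfer wz2 w2 wz2_add (by intro k; simp [wz2, w2, e2]) hD2
  -- the prime-level hypothesis for lemD
  have hprime : ∀ p : Sp, Prime p → ¬ p ∣ SX → ¬ p ∣ SY → p ∣ σμ →
      (¬ (p * p ∣ σμ)) ∧ p ∣ ση := by
    intro p hp hpx hpy hpμ
    have hsq : ¬ (p * p ∣ σμ) := by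
      rintro ⟨q, hq⟩
      have hvan : ∀ r ∈ zeroSet μ₀, trigEval (iota (p * q)) r = 0 := by
        intro r hr
        have h0 : evalHom r μ₀ = 0 := by rw [← trigEval_eq]; exact hr.2
        have h1 : evalHom r (iota σμ) = 0 := by
          rw [← hσμ, map_mul, h0, zero_mul]
        rw [hq] at h1
        simp only [map_mul] at h1
        rw [trigEval_eq]
        simp only [map_mul]
        rcases mul_eq_zero.1 h1 with h' | h'
        · rcases mul_eq_zero.1 h' with h'' | h''
          · rw [h'', zero_mul]
          · rw [h'', zero_mul]
        · rw [h', mul_zero]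
      have hμdvd : μ₀ ∣ iota (p * q) := hmin _ hvan
      have hιdvd : iota σμ ∣ iota (p * q) := by
        rw [← hσμ]
        exact (hu₀.mul_right_dvd).2 hμdvd
      obtain ⟨v, hv⟩ := key_fwd hιdvd
      rw [hq] at hv
      have hpq0 : p * q ≠ 0 := by
        intro h
        apply hσμ0
        rw [hq]
        rcases mul_eq_zero.1 h with h' | h'
        · rw [h']; ring
        · rw [h']; ring
      have hv2 : (p * q) * p ∣ (p * q) * AddMonoidAlgebra.single v 1 := by
        have e1 : p * p * q = (p * q) * p := by ring
        rw [e1] at hv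
        exact hv
      have hpv : p ∣ AddMonoidAlgebra.single v 1 :=
        (mul_dvd_mul_iff_left hpq0).1 hv2
      exact prime_ndvd_single hp hpx hpy v hpv
    refine ⟨hsq, ?_⟩
    by_contra hpη
    have hw1 : p ∣ wt w1 σμ := by
      have h := hpμ.trans hva
      rcases hp.dvd_mul.1 h with h' | h'
      · rcases hp.dvd_mul.1 h' with h'' | h''
        · exact absurd h'' hpη
        · exact h''
      · exact absurd h' (prime_ndvd_single hp hpx hpy va)
    have hw2 : p ∣ wt w2 σμ := by
      have h := hpμ.trans hvb
      rcases hp.dvd_mul.1 h with h' | h'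
      · rcases hp.dvd_mul.1 h' with h'' | h''
        · exact absurd h'' hpη
        · exact h''
      · exact absurd h' (prime_ndvd_single hp hpx hpy vb)
    obtain ⟨m, hm⟩ := hpμ
    have hpm : ¬ p ∣ m := by
      intro h
      apply hsq
      rw [hm]
      exact mul_dvd_mul_left p h
    have hwp1 : p ∣ wt w1 p := by
      have h := hw1
      rw [hm, wt_mul_w w1 w1_add] at h
      have h2 : p ∣ wt w1 p * m := (dvd_add_right (dvd_mul_right p _)).1 (by rwa [add_comm] at h)
      rcases hp.dvd_mul.1 h2 with h' | h'
      · exact h'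
      · exact absurd h' hpm
    have hwp2 : p ∣ wt w2 p := by
      have h := hw2
      rw [hm, wt_mul_w w2 w2_add] at h
      have h2 : p ∣ wt w2 p * m := (dvd_add_right (dvd_mul_right p _)).1 (by rwa [add_comm] at h)
      rcases hp.dvd_mul.1 h2 with h' | h'
      · exact h'
      · exact absurd h' hpm
    rcases prime_dvd_X_or_Y hp hwp1 hwp2 with h | h
    · exact hpx h
    · exact hpy h
  obtain ⟨v, hfin⟩ := lemD ση σμ hσμ0 hprime
  have hι : iota σμ ∣ iota ση := key_bwd v hfin
  rw [← hσμ, ← hση] at hι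
  have h1 : μ₀ ∣ η * s₁ := (hu₀.mul_right_dvd).1 hι
  exact (hu₁.dvd_mul_right).1 h1
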